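/- arXiv:1309.3386 — 2 statements merged into one kernel-verified Lean document; each statement's English description precedes it below -/
import Mathlib

section
/- Let A be a region of S^{d-1} written as a disjoint union of measurable subregions A_1, …, A_N, each with diameter strictly less than d_min(V) for a finite subset V of S^{d-1}. For T Haar-uniform on O(d), the estimator g_A(T) = (1/|V|) Σ_{v∈V} 1_A(Tv) satisfies Var(g_A(T)) ≤ π(A) − π(A)² + (N/|V| − 1)·π(A). -/
open MeasureTheory ProbabilityTheory

/-- If `A ⊆ S^{d-1}` is a disjoint union of `N` measurable pieces,
each of diameter strictly less than the minimal pairwise distance of the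
finite set `V` of unit vectors, then the spherical estimator
`g_A(T) = |V|⁻¹ ∑_{v∈V} 1_A(Tv)` (with `T` a random rotation whose action on
each unit vector has the uniform law `π` on the sphere) has variance at most
`π(A) − π(A)² + (N/|V| − 1)π(A)`. -/
theorem variance_spherical_estimator_le {d : ℕ} {Ω : Type*}
    [MeasurableSpace Ω] (P : Measure Ω) [IsProbabilityMeasure P]
    (A : Set (EuclideanSpace ℝ (Fin d))) (hAm : MeasurableSet A)
    (hAs : A ⊆ Metric.sphere (0 : EuclideanSpace ℝ (Fin d)) 1)
    (V : Finset (EuclideanSpace ℝ (Fin d))) (hV : ∀ v ∈ V, ‖v‖ = 1)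
    (hVne : V.Nonempty)
    (N : ℕ) (𝒜 : Fin N → Set (EuclideanSpace ℝ (Fin d)))
    (h𝒜m : ∀ i, MeasurableSet (𝒜 i))
    (h𝒜disj : Pairwise (Function.onFun Disjoint 𝒜))
    (h𝒜union : (⋃ i, 𝒜 i) = A)
    (h𝒜diam : ∀ i, Metric.diam (𝒜 i) <
      sInf {r : ℝ | ∃ v ∈ V, ∃ w ∈ V, v ≠ w ∧ r = dist v w})
    (π : Measure (EuclideanSpace ℝ (Fin d))) [IsProbabilityMeasure π]
    (T : Ω → (EuclideanSpace ℝ (Fin d) ≃ₗᵢ[ℝ] EuclideanSpace ℝ (Fin d)))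
    (hTmeas : ∀ v : EuclideanSpace ℝ (Fin d), Measurable fun ω => T ω v)
    (hTlaw : ∀ v : EuclideanSpace ℝ (Fin d), ‖v‖ = 1 →
      Measure.map (fun ω => T ω v) P = π) :
    variance (fun ω => (V.card : ℝ)⁻¹ *
        ∑ v ∈ V, A.indicator (fun _ => (1 : ℝ)) (T ω v)) P
      ≤ (π A).toReal - (π A).toReal ^ 2
        + ((N : ℝ) / (V.card : ℝ) - 1) * (π A).toReal := by
  classical
  set g : Ω → ℝ := fun ω => (V.card : ℝ)⁻¹ *
      ∑ v ∈ V, A.indicator (fun _ => (1 : ℝ)) (T ω v) with hgdef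
  have hn : 0 < (V.card : ℝ) := by exact_mod_cast Finset.card_pos.mpr hVne
  -- measurability of each term
  have hterm_eq : ∀ v : EuclideanSpace ℝ (Fin d),
      (fun ω => A.indicator (fun _ => (1 : ℝ)) (T ω v))
        = Set.indicator ((fun ω => T ω v) ⁻¹' A) (fun _ => (1 : ℝ)) := by
    intro v; funext ω; simp [Set.indicator_apply, Set.mem_preimage]
  have hmeas_term : ∀ v : EuclideanSpace ℝ (Fin d),
      Measurable fun ω => A.indicator (fun _ => (1 : ℝ)) (T ω v) := by
    intro v
    rw [hterm_eq v]
    exact measurable_const.indicator ((hTmeas v) hAm)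
  have hgmeas : Measurable g :=
    (Finset.measurable_sum V fun v _ => hmeas_term v).const_mul _
  -- pointwise bounds
  have hg0 : ∀ ω, 0 ≤ g ω := by
    intro ω
    apply mul_nonneg (by positivity)
    exact Finset.sum_nonneg fun v _ => Set.indicator_nonneg (fun _ _ => zero_le_one) _
  have hAsub : ∀ i, 𝒜 i ⊆ A := by
    intro i; rw [← h𝒜union]; exact Set.subset_iUnion 𝒜 i
  have hsum_le : ∀ ω, (∑ v ∈ V, A.indicator (fun _ => (1 : ℝ)) (T ω v)) ≤ N := by
    intro ω
    have hsum : (∑ v ∈ V, A.indicator (fun _ => (1 : ℝ)) (T ω v))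
        = ((V.filter (fun v => T ω v ∈ A)).card : ℝ) := by
      rw [Finset.card_filter]
      push_cast
      apply Finset.sum_congr rfl
      intro v _
      by_cases h : T ω v ∈ A <;> simp [h]
    rw [hsum]
    rcases Finset.eq_empty_or_nonempty (V.filter (fun v => T ω v ∈ A)) with he | hne
    · rw [he]; simp
    · obtain ⟨v0, hv0⟩ := hne
      have hv0A : T ω v0 ∈ A := (Finset.mem_filter.mp hv0).2
      have hex0 : ∃ i, T ω v0 ∈ 𝒜 i := Set.mem_iUnion.mp (h𝒜union ▸ hv0A)
      haveI : Nonempty (Fin N) := ⟨hex0.choose⟩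
      set f : EuclideanSpace ℝ (Fin d) → Fin N := fun v =>
        if h : ∃ i, T ω v ∈ 𝒜 i then h.choose else Classical.arbitrary _ with hfdef
      have hf : ∀ v ∈ V.filter (fun v => T ω v ∈ A), T ω v ∈ 𝒜 (f v) := by
        intro v hv
        have hex : ∃ i, T ω v ∈ 𝒜 i :=
          Set.mem_iUnion.mp (h𝒜union ▸ (Finset.mem_filter.mp hv).2)
        simp only [hfdef, dif_pos hex]
        exact hex.choose_spec
      have hinj : Set.InjOn f (V.filter (fun v => T ω v ∈ A)) := by
        intro v hv w hw hvw
        by_contra hne2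
        have hvV : v ∈ V := (Finset.mem_filter.mp (by exact_mod_cast hv)).1
        have hwV : w ∈ V := (Finset.mem_filter.mp (by exact_mod_cast hw)).1
        have h1 : sInf {r : ℝ | ∃ v ∈ V, ∃ w ∈ V, v ≠ w ∧ r = dist v w} ≤ dist v w := by
          apply csInf_le
          · refine ⟨0, ?_⟩
            rintro r ⟨a, _, b, _, _, rfl⟩
            exact dist_nonneg
          · exact ⟨v, hvV, w, hwV, hne2, rfl⟩
        have h2 : dist (T ω v) (T ω w) ≤ Metric.diam (𝒜 (f v)) := by
          apply Metric.dist_le_diam_of_mem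
          · exact (Metric.isBounded_sphere).subset ((hAsub (f v)).trans hAs)
          · exact hf v (by exact_mod_cast hv)
          · rw [hvw]; exact hf w (by exact_mod_cast hw)
        rw [(T ω).dist_map] at h2
        have := h𝒜diam (f v)
        linarith
      have hcard : (V.filter (fun v => T ω v ∈ A)).card
          ≤ (Finset.univ : Finset (Fin N)).card :=
        Finset.card_le_card_of_injOn f (fun v _ => Finset.mem_univ _) hinj
      simpa using (Nat.cast_le (α := ℝ)).mpr hcard
  have hg_le : ∀ ω, g ω ≤ (N : ℝ) / (V.card : ℝ) := by
    intro ω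
    rw [hgdef, div_eq_inv_mul]
    exact mul_le_mul_of_nonneg_left (hsum_le ω) (by positivity)
  -- integral of each term
  have hint_term : ∀ v ∈ V,
      ∫ ω, A.indicator (fun _ => (1 : ℝ)) (T ω v) ∂P = (π A).toReal := by
    intro v hv
    rw [hterm_eq v]
    have hms : MeasurableSet ((fun ω => T ω v) ⁻¹' A) := (hTmeas v) hAm
    have : ∫ ω, Set.indicator ((fun ω => T ω v) ⁻¹' A) (fun _ => (1:ℝ)) ω ∂P
        = (P ((fun ω => T ω v) ⁻¹' A)).toReal := by
      exact integral_indicator_one (μ := P) hms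
    rw [this, ← Measure.map_apply (hTmeas v) hAm, hTlaw v (hV v hv)]
  have hint_term_integrable : ∀ v : EuclideanSpace ℝ (Fin d),
      Integrable (fun ω => A.indicator (fun _ => (1 : ℝ)) (T ω v)) P := by
    intro v
    rw [hterm_eq v]
    exact (integrable_const (1:ℝ)).indicator ((hTmeas v) hAm)
  have hEg : ∫ ω, g ω ∂P = (π A).toReal := by
    rw [hgdef]
    rw [integral_const_mul, integral_finset_sum V (fun v _ => hint_term_integrable v),
      Finset.sum_congr rfl hint_term]
    rw [Finset.sum_const, nsmul_eq_mul]
    exact inv_mul_cancel_left₀ hn.ne' _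
  -- Memℒp
  have hgLp : MemLp g 2 P := by
    apply MemLp.of_bound hgmeas.aestronglyMeasurable ((N : ℝ) / (V.card : ℝ))
    filter_upwards with ω
    rw [Real.norm_eq_abs, abs_of_nonneg (hg0 ω)]
    exact hg_le ω
  rw [variance_eq_sub hgLp]
  have hg2int : Integrable (g ^ 2) P := hgLp.integrable_sq
  have hgint : Integrable g P := hgLp.integrable one_le_two
  have hE2 : ∫ ω, (g ^ 2) ω ∂P ≤ ((N : ℝ) / (V.card : ℝ)) * (π A).toReal := by
    rw [← hEg, ← integral_const_mul]
    apply integral_mono hg2int (hgint.const_mul _)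
    intro ω
    simp only [Pi.pow_apply]
    have := hg_le ω
    have := hg0 ω
    nlinarith
  have : (P[g ^ 2] : ℝ) = ∫ ω, (g ^ 2) ω ∂P := rfl
  rw [this]
  have hEgP : (P[g] : ℝ) = (π A).toReal := hEg
  rw [hEgP]
  nlinarith [hE2]
end

section
/- Let V ⊂ S^{d-1} be a centrally symmetric finite set (v ∈ V implies −v ∈ V) decomposed as V = V⁺ ⊔ (−V⁺), and let A be a centrally antisymmetric region (A ∩ (−A) = ∅). Let T be Haar-uniform on O(d), and let {r_v}_{v∈V} be i.i.d. chi(d) random variables independent of T. Define p̂^V = (1/|V|) Σ_{v∈V} 1_A(r_v · Tv) and p̂^V_AT = (1/|V|) Σ_{v∈V⁺} [1_A(r_v · Tv) + 1_A(−r_v · Tv)]. Then Var(p̂^V_AT) ≤ Var(p̂^V). -/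
open MeasureTheory ProbabilityTheory Pointwise

/-- Auxiliary: indicator of `A` evaluated at `r a ω • T ω v`. -/
noncomputable def auxG {d : ℕ} {Ω : Type*} (A : Set (EuclideanSpace ℝ (Fin d)))
    (r : EuclideanSpace ℝ (Fin d) → Ω → ℝ)
    (T : Ω → (EuclideanSpace ℝ (Fin d) ≃ₗᵢ[ℝ] EuclideanSpace ℝ (Fin d)))
    (a v : EuclideanSpace ℝ (Fin d)) (ω : Ω) : ℝ :=
  A.indicator (fun _ => (1 : ℝ)) (r a ω • T ω v)

/-- Auxiliary: indicator of `A` evaluated at `-(r a ω • T ω v)`. -/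
noncomputable def auxH {d : ℕ} {Ω : Type*} (A : Set (EuclideanSpace ℝ (Fin d)))
    (r : EuclideanSpace ℝ (Fin d) → Ω → ℝ)
    (T : Ω → (EuclideanSpace ℝ (Fin d) ≃ₗᵢ[ℝ] EuclideanSpace ℝ (Fin d)))
    (a v : EuclideanSpace ℝ (Fin d)) (ω : Ω) : ℝ :=
  A.indicator (fun _ => (1 : ℝ)) (-(r a ω • T ω v))

/-- Let `V ⊆ S^{d-1}` be a finite centrally symmetric set,
decomposed as `V = V⁺ ⊔ (−V⁺)`, and let `A` be centrally antisymmetric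
(`A ∩ (−A) = ∅`). Let `T` be a random rotation whose action on each unit
vector is uniform on the sphere (law `π`), and let `(r_v)` be i.i.d.
nonnegative radii independent of `T`. Then the antithetic spherical estimator
`p̂^V_AT = |V|⁻¹ ∑_{v∈V⁺} [1_A(r_v·Tv) + 1_A(−r_v·Tv)]` has variance at most
that of `p̂^V = |V|⁻¹ ∑_{v∈V} 1_A(r_v·Tv)`. -/
theorem variance_antithetic_le {d : ℕ} {Ω : Type*} [MeasurableSpace Ω]
    (P : Measure Ω) [IsProbabilityMeasure P]
    (V Vp : Set (EuclideanSpace ℝ (Fin d)))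
    (hVfin : V.Finite) (hVpfin : Vp.Finite)
    (hVs : ∀ v ∈ V, ‖v‖ = 1)
    (hsym : ∀ v ∈ V, -v ∈ V)
    (hVdecomp : V = Vp ∪ (-Vp)) (hVpdisj : Disjoint Vp (-Vp))
    (A : Set (EuclideanSpace ℝ (Fin d))) (hAm : MeasurableSet A)
    (hanti : A ∩ (-A) = ∅)
    (T : Ω → (EuclideanSpace ℝ (Fin d) ≃ₗᵢ[ℝ] EuclideanSpace ℝ (Fin d)))
    (hTmeas : ∀ v : EuclideanSpace ℝ (Fin d), Measurable fun ω => T ω v)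
    (π : Measure (EuclideanSpace ℝ (Fin d))) [IsProbabilityMeasure π]
    (hTlaw : ∀ v : EuclideanSpace ℝ (Fin d), ‖v‖ = 1 →
      Measure.map (fun ω => T ω v) P = π)
    (r : EuclideanSpace ℝ (Fin d) → Ω → ℝ)
    (hrmeas : ∀ v, Measurable (r v))
    (hrpos : ∀ v ω, 0 ≤ r v ω)
    (hrid : ∀ v w, IdentDistrib (r v) (r w) P P)
    (hriid : iIndepFun (fun v : V => r v) P)
    (hindepT : IndepFun (fun ω => fun v : V => r v ω)
      (fun ω => fun v : V => T ω v) P) :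
    variance (fun ω => (Nat.card V : ℝ)⁻¹ *
        ∑ v ∈ hVpfin.toFinset,
          (A.indicator (fun _ => (1 : ℝ)) (r v ω • T ω v)
            + A.indicator (fun _ => (1 : ℝ)) (-(r v ω • T ω v)))) P
      ≤ variance (fun ω => (Nat.card V : ℝ)⁻¹ *
        ∑ v ∈ hVfin.toFinset,
          A.indicator (fun _ => (1 : ℝ)) (r v ω • T ω v)) P := by
  classical
  set I : EuclideanSpace ℝ (Fin d) → ℝ := A.indicator (fun _ => (1 : ℝ)) with hIdef
  have hImeas : Measurable I := measurable_const.indicator hAm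
  have hInn : ∀ x, 0 ≤ I x := fun x => Set.indicator_nonneg (fun _ _ => zero_le_one) x
  have hIle : ∀ x, I x ≤ 1 := by
    intro x; by_cases h : x ∈ A <;> simp [hIdef, Set.indicator_apply, h]
  have hIsq : ∀ x, I x * I x = I x := by
    intro x; by_cases h : x ∈ A <;> simp [hIdef, Set.indicator_apply, h]
  have hIzero : ∀ x, I x * I (-x) = 0 := by
    intro x
    by_cases h : x ∈ A
    · have h2 : -x ∉ A := by
        intro h2
        have : x ∈ A ∩ (-A) := ⟨h, by simpa [Set.mem_neg] using h2⟩
        rw [hanti] at this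
        exact this.elim
      simp [hIdef, Set.indicator_apply, h, h2]
    · simp [hIdef, Set.indicator_apply, h]
  -- memberships
  have memV : ∀ {v}, v ∈ Vp → v ∈ V := by
    intro v hv; rw [hVdecomp]; exact Or.inl hv
  have memVn : ∀ {v}, v ∈ Vp → -v ∈ V := fun hv => hsym _ (memV hv)
  have hne_neg : ∀ {v w}, v ∈ Vp → w ∈ Vp → v ≠ -w := by
    intro v w hv hw h
    exact Set.disjoint_left.mp hVpdisj hv (by rw [h]; exact Set.neg_mem_neg.mpr hw)
  -- law lemmas
  have law1 : ∀ a a' v : EuclideanSpace ℝ (Fin d), a ∈ V → a' ∈ V → v ∈ V →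
      Measure.map (fun ω => (r a ω, T ω v)) P
        = Measure.map (fun ω => (r a' ω, T ω v)) P := by
    intro a a' v ha ha' hv
    have key : ∀ b, b ∈ V → Measure.map (fun ω => (r b ω, T ω v)) P
        = (Measure.map (r b) P).prod (Measure.map (fun ω => T ω v) P) := by
      intro b hb
      have hind : IndepFun (r b) (fun ω => T ω v) P := by
        have := hindepT.comp (φ := fun g : V → ℝ => g ⟨b, hb⟩)
          (ψ := fun h : V → EuclideanSpace ℝ (Fin d) => h ⟨v, hv⟩)
          (measurable_pi_apply (X := fun _ : V => ℝ) (⟨b, hb⟩ : V)) (measurable_pi_apply (X := fun _ : V => EuclideanSpace ℝ (Fin d)) (⟨v, hv⟩ : V))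
        exact this
      exact (indepFun_iff_map_prod_eq_prod_map_map (hrmeas b).aemeasurable
        (hTmeas v).aemeasurable).mp hind
    rw [key a ha, key a' ha', (hrid a a').map_eq]
  have lawpair : ∀ a b a' b' v w : EuclideanSpace ℝ (Fin d),
      a ∈ V → b ∈ V → a' ∈ V → b' ∈ V → v ∈ V → w ∈ V → a ≠ b → a' ≠ b' →
      Measure.map (fun ω => ((r a ω, r b ω), (T ω v, T ω w))) P
        = Measure.map (fun ω => ((r a' ω, r b' ω), (T ω v, T ω w))) P := by
    intro a b a' b' v w ha hb ha' hb' hv hw hab hab'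
    have hTvw : Measurable (fun ω => (T ω v, T ω w)) := (hTmeas v).prodMk (hTmeas w)
    have key : ∀ c e : EuclideanSpace ℝ (Fin d), c ∈ V → e ∈ V → c ≠ e →
        Measure.map (fun ω => ((r c ω, r e ω), (T ω v, T ω w))) P
          = ((Measure.map (r c) P).prod (Measure.map (r e) P)).prod
              (Measure.map (fun ω => (T ω v, T ω w)) P) := by
      intro c e hc he hce
      have hind : IndepFun (fun ω => (r c ω, r e ω)) (fun ω => (T ω v, T ω w)) P := by
        have := hindepT.comp (φ := fun g : V → ℝ => (g ⟨c, hc⟩, g ⟨e, he⟩))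
          (ψ := fun h : V → EuclideanSpace ℝ (Fin d) => (h ⟨v, hv⟩, h ⟨w, hw⟩))
          ((measurable_pi_apply (X := fun _ : V => ℝ) (⟨c, hc⟩ : V)).prodMk
            (measurable_pi_apply (X := fun _ : V => ℝ) (⟨e, he⟩ : V)))
          ((measurable_pi_apply (X := fun _ : V => EuclideanSpace ℝ (Fin d)) (⟨v, hv⟩ : V)).prodMk
            (measurable_pi_apply (X := fun _ : V => EuclideanSpace ℝ (Fin d)) (⟨w, hw⟩ : V)))
        exact this
      have hre : IndepFun (r c) (r e) P := by
        have hne : (⟨c, hc⟩ : V) ≠ ⟨e, he⟩ := by simpa [Subtype.ext_iff] using hce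
        exact hriid.indepFun hne
      have h1 := (indepFun_iff_map_prod_eq_prod_map_map
          ((hrmeas c).prodMk (hrmeas e)).aemeasurable hTvw.aemeasurable).mp hind
      have h2 := (indepFun_iff_map_prod_eq_prod_map_map (hrmeas c).aemeasurable
          (hrmeas e).aemeasurable).mp hre
      rw [h1, h2]
    rw [key a b ha hb hab, key a' b' ha' hb' hab', (hrid a a').map_eq, (hrid b b').map_eq]
  -- integral corollaries
  have C1 : ∀ (φ : ℝ × EuclideanSpace ℝ (Fin d) → ℝ), Measurable φ →
      ∀ a a' v : EuclideanSpace ℝ (Fin d), a ∈ V → a' ∈ V → v ∈ V →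
      ∫ ω, φ (r a ω, T ω v) ∂P = ∫ ω, φ (r a' ω, T ω v) ∂P := by
    intro φ hφ a a' v ha ha' hv
    have hZ : ∀ b, Measurable (fun ω => (r b ω, T ω v)) :=
      fun b => (hrmeas b).prodMk (hTmeas v)
    have e1 : ∫ ω, φ (r a ω, T ω v) ∂P
        = ∫ p, φ p ∂(Measure.map (fun ω => (r a ω, T ω v)) P) :=
      (integral_map (hZ a).aemeasurable hφ.aestronglyMeasurable).symm
    have e2 : ∫ ω, φ (r a' ω, T ω v) ∂P
        = ∫ p, φ p ∂(Measure.map (fun ω => (r a' ω, T ω v)) P) :=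
      (integral_map (hZ a').aemeasurable hφ.aestronglyMeasurable).symm
    rw [e1, e2, law1 a a' v ha ha' hv]
  have C2 : ∀ (φ₁ φ₂ : ℝ × EuclideanSpace ℝ (Fin d) → ℝ), Measurable φ₁ → Measurable φ₂ →
      ∀ a b a' b' v w : EuclideanSpace ℝ (Fin d),
      a ∈ V → b ∈ V → a' ∈ V → b' ∈ V → v ∈ V → w ∈ V → a ≠ b → a' ≠ b' →
      ∫ ω, φ₁ (r a ω, T ω v) * φ₂ (r b ω, T ω w) ∂P
        = ∫ ω, φ₁ (r a' ω, T ω v) * φ₂ (r b' ω, T ω w) ∂P := by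
    intro φ₁ φ₂ h1 h2 a b a' b' v w ha hb ha' hb' hv hw hab hab'
    have hΦm : Measurable (fun p : (ℝ × ℝ) ×
        (EuclideanSpace ℝ (Fin d) × EuclideanSpace ℝ (Fin d)) =>
        φ₁ (p.1.1, p.2.1) * φ₂ (p.1.2, p.2.2)) :=
      (h1.comp ((measurable_fst.fst).prodMk (measurable_snd.fst))).mul
        (h2.comp ((measurable_fst.snd).prodMk (measurable_snd.snd)))
    have hZ : ∀ c e, Measurable (fun ω => ((r c ω, r e ω), (T ω v, T ω w))) :=
      fun c e => ((hrmeas c).prodMk (hrmeas e)).prodMk ((hTmeas v).prodMk (hTmeas w))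
    have e1 : ∫ ω, φ₁ (r a ω, T ω v) * φ₂ (r b ω, T ω w) ∂P
        = ∫ p, φ₁ (p.1.1, p.2.1) * φ₂ (p.1.2, p.2.2)
            ∂(Measure.map (fun ω => ((r a ω, r b ω), (T ω v, T ω w))) P) :=
      (integral_map (hZ a b).aemeasurable hΦm.aestronglyMeasurable).symm
    have e2 : ∫ ω, φ₁ (r a' ω, T ω v) * φ₂ (r b' ω, T ω w) ∂P
        = ∫ p, φ₁ (p.1.1, p.2.1) * φ₂ (p.1.2, p.2.2)
            ∂(Measure.map (fun ω => ((r a' ω, r b' ω), (T ω v, T ω w))) P) :=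
      (integral_map (hZ a' b').aemeasurable hΦm.aestronglyMeasurable).symm
    rw [e1, e2, lawpair a b a' b' v w ha hb ha' hb' hv hw hab hab']
  -- the two basic measurable functions on ℝ × E
  set φG : ℝ × EuclideanSpace ℝ (Fin d) → ℝ := fun p => I (p.1 • p.2) with hφGdef
  set φH : ℝ × EuclideanSpace ℝ (Fin d) → ℝ := fun p => I (-(p.1 • p.2)) with hφHdef
  have hφGm : Measurable φG := hImeas.comp (measurable_fst.smul measurable_snd)
  have hφHm : Measurable φH := hImeas.comp (measurable_fst.smul measurable_snd).neg
  set G := auxG A r T with hGdef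
  set H := auxH A r T with hHdef
  have hGm : ∀ a v, Measurable (G a v) :=
    fun a v => hImeas.comp ((hrmeas a).smul (hTmeas v))
  have hHm : ∀ a v, Measurable (H a v) :=
    fun a v => hImeas.comp ((hrmeas a).smul (hTmeas v)).neg
  have hGnn : ∀ a v ω, 0 ≤ G a v ω := fun a v ω => hInn _
  have hHnn : ∀ a v ω, 0 ≤ H a v ω := fun a v ω => hInn _
  have hGle : ∀ a v ω, G a v ω ≤ 1 := fun a v ω => hIle _
  have hHle : ∀ a v ω, H a v ω ≤ 1 := fun a v ω => hIle _
  -- integrability helper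
  have hintb : ∀ f : Ω → ℝ, Measurable f → (∀ ω, 0 ≤ f ω) → (∀ ω, f ω ≤ 1) →
      Integrable f P := by
    intro f hf h0 h1
    exact memLp_one_iff_integrable.mp <| MemLp.of_bound hf.aestronglyMeasurable 1 <|
      Filter.Eventually.of_forall fun ω => by
        rw [Real.norm_eq_abs, abs_of_nonneg (h0 ω)]; exact h1 ω
  have hGint : ∀ a v, Integrable (G a v) P :=
    fun a v => hintb _ (hGm a v) (hGnn a v) (hGle a v)
  have hHint : ∀ a v, Integrable (H a v) P :=
    fun a v => hintb _ (hHm a v) (hHnn a v) (hHle a v)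
  have hmulint : ∀ (f g : Ω → ℝ), Measurable f → Measurable g →
      (∀ ω, 0 ≤ f ω) → (∀ ω, f ω ≤ 1) → (∀ ω, 0 ≤ g ω) → (∀ ω, g ω ≤ 1) →
      Integrable (fun ω => f ω * g ω) P := by
    intro f g hf hg hf0 hf1 hg0 hg1
    exact hintb _ (hf.mul hg) (fun ω => mul_nonneg (hf0 ω) (hg0 ω))
      (fun ω => mul_le_one₀ (hf1 ω) (hg0 ω) (hg1 ω))
  -- reduce to the unscaled sums
  have main : variance (fun ω => ∑ v ∈ hVpfin.toFinset, (G v v ω + H v v ω)) P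
      ≤ variance (fun ω => ∑ v ∈ hVfin.toFinset, G v v ω) P := by
    -- corollaries of C1/C2 phrased with G and H
    have C1H : ∀ a a' v : EuclideanSpace ℝ (Fin d), a ∈ V → a' ∈ V → v ∈ V →
        ∫ ω, H a v ω ∂P = ∫ ω, H a' v ω ∂P :=
      fun a a' v ha ha' hv => C1 φH hφHm a a' v ha ha' hv
    have C2GH : ∀ a b a' b' v w : EuclideanSpace ℝ (Fin d),
        a ∈ V → b ∈ V → a' ∈ V → b' ∈ V → v ∈ V → w ∈ V → a ≠ b → a' ≠ b' →
        ∫ ω, G a v ω * H b w ω ∂P = ∫ ω, G a' v ω * H b' w ω ∂P :=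
      fun a b a' b' v w ha hb ha' hb' hv hw hab hab' =>
        C2 φG φH hφGm hφHm a b a' b' v w ha hb ha' hb' hv hw hab hab'
    have C2HG : ∀ a b a' b' v w : EuclideanSpace ℝ (Fin d),
        a ∈ V → b ∈ V → a' ∈ V → b' ∈ V → v ∈ V → w ∈ V → a ≠ b → a' ≠ b' →
        ∫ ω, H a v ω * G b w ω ∂P = ∫ ω, H a' v ω * G b' w ω ∂P :=
      fun a b a' b' v w ha hb ha' hb' hv hw hab hab' =>
        C2 φH φG hφHm hφGm a b a' b' v w ha hb ha' hb' hv hw hab hab'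
    have C2HH : ∀ a b a' b' v w : EuclideanSpace ℝ (Fin d),
        a ∈ V → b ∈ V → a' ∈ V → b' ∈ V → v ∈ V → w ∈ V → a ≠ b → a' ≠ b' →
        ∫ ω, H a v ω * H b w ω ∂P = ∫ ω, H a' v ω * H b' w ω ∂P :=
      fun a b a' b' v w ha hb ha' hb' hv hw hab hab' =>
        C2 φH φH hφHm hφHm a b a' b' v w ha hb ha' hb' hv hw hab hab'
    -- pointwise identities
    have hGHzero : ∀ (v : EuclideanSpace ℝ (Fin d)) (ω : Ω), G v v ω * H v v ω = 0 :=
      fun v ω => hIzero (r v ω • T ω v)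
    have hGsq : ∀ (a v : EuclideanSpace ℝ (Fin d)) (ω : Ω), G a v ω * G a v ω = G a v ω :=
      fun a v ω => hIsq _
    have hHsq : ∀ (a v : EuclideanSpace ℝ (Fin d)) (ω : Ω), H a v ω * H a v ω = H a v ω :=
      fun a v ω => hIsq _
    -- rewrite the sum over V as a sum over Vp
    have hFv : hVfin.toFinset = hVpfin.toFinset ∪ hVpfin.toFinset.image (fun v => -v) := by
      ext x
      simp only [Set.Finite.mem_toFinset, Finset.mem_union, Finset.mem_image,
        Set.Finite.mem_toFinset]
      rw [hVdecomp]
      simp only [Set.mem_union, Set.mem_neg]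
      constructor
      · rintro (h | h)
        · exact Or.inl h
        · exact Or.inr ⟨-x, h, neg_neg x⟩
      · rintro (h | ⟨a, ha, rfl⟩)
        · exact Or.inl h
        · exact Or.inr (by simpa using ha)
    have hdisjF : Disjoint hVpfin.toFinset (hVpfin.toFinset.image (fun v => -v)) := by
      rw [Finset.disjoint_left]
      intro x hx hx2
      simp only [Finset.mem_image, Set.Finite.mem_toFinset] at hx hx2
      obtain ⟨a, ha, rfl⟩ := hx2
      exact (hne_neg hx ha) rfl
    have hS1 : (fun ω => ∑ v ∈ hVfin.toFinset, G v v ω)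
        = fun ω => ∑ v ∈ hVpfin.toFinset, (G v v ω + H (-v) v ω) := by
      funext ω
      rw [hFv, Finset.sum_union hdisjF,
        Finset.sum_image (fun x _ y _ h => neg_injective h), Finset.sum_add_distrib]
      congr 1
      refine Finset.sum_congr rfl fun x _ => ?_
      show I (r (-x) ω • T ω (-x)) = I (-(r (-x) ω • T ω x))
      rw [map_neg, smul_neg]
    rw [hS1]
    -- MemLp facts
    have hmem2 : ∀ f : Ω → ℝ, Measurable f → (∀ ω, 0 ≤ f ω) → (∀ ω, f ω ≤ 1) →
        MemLp f 2 P := fun f hf h0 h1 =>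
      MemLp.of_bound hf.aestronglyMeasurable 1
        (Filter.Eventually.of_forall fun ω => by
          rw [Real.norm_eq_abs, abs_of_nonneg (h0 ω)]; exact h1 ω)
    have hS1mem : MemLp (fun ω => ∑ v ∈ hVpfin.toFinset, (G v v ω + H (-v) v ω)) 2 P :=
      memLp_finset_sum _ fun v _ =>
        (hmem2 _ (hGm v v) (hGnn v v) (hGle v v)).add
          (hmem2 _ (hHm (-v) v) (hHnn (-v) v) (hHle (-v) v))
    have hS2mem : MemLp (fun ω => ∑ v ∈ hVpfin.toFinset, (G v v ω + H v v ω)) 2 P :=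
      memLp_finset_sum _ fun v _ =>
        (hmem2 _ (hGm v v) (hGnn v v) (hGle v v)).add
          (hmem2 _ (hHm v v) (hHnn v v) (hHle v v))
    rw [variance_eq_sub hS2mem, variance_eq_sub hS1mem]
    -- products are integrable
    have hGH : ∀ a v b w : EuclideanSpace ℝ (Fin d),
        Integrable (fun ω => G a v ω * H b w ω) P := fun a v b w =>
      hmulint _ _ (hGm a v) (hHm b w) (hGnn a v) (hGle a v) (hHnn b w) (hHle b w)
    have hHG : ∀ a v b w : EuclideanSpace ℝ (Fin d),
        Integrable (fun ω => H a v ω * G b w ω) P := fun a v b w =>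
      hmulint _ _ (hHm a v) (hGm b w) (hHnn a v) (hHle a v) (hGnn b w) (hGle b w)
    have hGG : ∀ a v b w : EuclideanSpace ℝ (Fin d),
        Integrable (fun ω => G a v ω * G b w ω) P := fun a v b w =>
      hmulint _ _ (hGm a v) (hGm b w) (hGnn a v) (hGle a v) (hGnn b w) (hGle b w)
    have hHH : ∀ a v b w : EuclideanSpace ℝ (Fin d),
        Integrable (fun ω => H a v ω * H b w ω) P := fun a v b w =>
      hmulint _ _ (hHm a v) (hHm b w) (hHnn a v) (hHle a v) (hHnn b w) (hHle b w)
    have hprod_int : ∀ a b c e v w : EuclideanSpace ℝ (Fin d),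
        Integrable (fun ω => (G a v ω + H b v ω) * (G c w ω + H e w ω)) P := by
      intro a b c e v w
      have hre : (fun ω => (G a v ω + H b v ω) * (G c w ω + H e w ω))
          = fun ω => G a v ω * G c w ω + (G a v ω * H e w ω
              + (H b v ω * G c w ω + H b v ω * H e w ω)) := by
        funext ω; ring
      rw [hre]
      exact (hGG a v c w).add ((hGH a v e w).add ((hHG b v c w).add (hHH b v e w)))
    have intGH' : ∀ a b v : EuclideanSpace ℝ (Fin d),
        Integrable (fun ω => G a v ω + H b v ω) P :=
      fun a b v => (hGint a v).add (hHint b v)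
    -- equality of means
    have hmean : (∫ ω, ∑ v ∈ hVpfin.toFinset, (G v v ω + H (-v) v ω) ∂P)
        = ∫ ω, ∑ v ∈ hVpfin.toFinset, (G v v ω + H v v ω) ∂P := by
      have m1 : (∫ ω, ∑ v ∈ hVpfin.toFinset, (G v v ω + H (-v) v ω) ∂P)
          = ∑ v ∈ hVpfin.toFinset, ∫ ω, (G v v ω + H (-v) v ω) ∂P :=
        integral_finset_sum _ (fun v _ => intGH' v (-v) v)
      have m2 : (∫ ω, ∑ v ∈ hVpfin.toFinset, (G v v ω + H v v ω) ∂P)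
          = ∑ v ∈ hVpfin.toFinset, ∫ ω, (G v v ω + H v v ω) ∂P :=
        integral_finset_sum _ (fun v _ => intGH' v v v)
      rw [m1, m2]
      refine Finset.sum_congr rfl fun v hv => ?_
      have hv' : v ∈ Vp := hVpfin.mem_toFinset.mp hv
      have a1 : ∫ ω, (G v v ω + H (-v) v ω) ∂P
          = (∫ ω, G v v ω ∂P) + ∫ ω, H (-v) v ω ∂P :=
        integral_add (hGint v v) (hHint (-v) v)
      have a2 : ∫ ω, (G v v ω + H v v ω) ∂P
          = (∫ ω, G v v ω ∂P) + ∫ ω, H v v ω ∂P :=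
        integral_add (hGint v v) (hHint v v)
      rw [a1, a2, C1H (-v) v v (memVn hv') (memV hv') (memV hv')]
    -- second moments
    have hexp : ∀ (t : EuclideanSpace ℝ (Fin d) → Ω → ℝ),
        ((fun ω => ∑ v ∈ hVpfin.toFinset, t v ω) ^ 2)
          = fun ω => ∑ v ∈ hVpfin.toFinset, ∑ w ∈ hVpfin.toFinset, t v ω * t w ω := by
      intro t; funext ω
      simp only [Pi.pow_apply]
      rw [sq, Finset.sum_mul_sum]
    have hsq : (∫ ω, ((fun ω' => ∑ v ∈ hVpfin.toFinset, (G v v ω' + H v v ω')) ^ 2) ω ∂P)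
        ≤ ∫ ω, ((fun ω' => ∑ v ∈ hVpfin.toFinset, (G v v ω' + H (-v) v ω')) ^ 2) ω ∂P := by
      rw [hexp fun v ω => G v v ω + H v v ω, hexp fun v ω => G v v ω + H (-v) v ω]
      rw [integral_finset_sum _ (fun v _ =>
          integrable_finset_sum _ (fun w _ => hprod_int v v w w v w)),
        integral_finset_sum _ (fun v _ =>
          integrable_finset_sum _ (fun w _ => hprod_int v (-v) w (-w) v w))]
      refine Finset.sum_le_sum fun v hv => ?_
      rw [integral_finset_sum _ (fun w _ => hprod_int v v w w v w),
        integral_finset_sum _ (fun w _ => hprod_int v (-v) w (-w) v w)]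
      refine Finset.sum_le_sum fun w hw => ?_
      have hv' : v ∈ Vp := hVpfin.mem_toFinset.mp hv
      have hw' : w ∈ Vp := hVpfin.mem_toFinset.mp hw
      by_cases hvw : v = w
      · subst hvw
        -- diagonal term
        have l1 : (fun ω => (G v v ω + H v v ω) * (G v v ω + H v v ω))
            = fun ω => G v v ω + H v v ω := by
          funext ω
          have h0 := hGHzero v ω
          have h1 := hGsq v v ω
          have h2 := hHsq v v ω
          nlinarith [h0, h1, h2]
        have l2 : (fun ω => (G v v ω + H (-v) v ω) * (G v v ω + H (-v) v ω))
            = fun ω => G v v ω + H (-v) v ω + 2 * (G v v ω * H (-v) v ω) := by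
          funext ω
          have h1 := hGsq v v ω
          have h2 := hHsq (-v) v ω
          nlinarith [h1, h2]
        rw [l1, l2]
        have d1 : ∫ ω, (G v v ω + H v v ω) ∂P
            = (∫ ω, G v v ω ∂P) + ∫ ω, H v v ω ∂P :=
          integral_add (hGint v v) (hHint v v)
        have d2 : ∫ ω, (G v v ω + H (-v) v ω + 2 * (G v v ω * H (-v) v ω)) ∂P
            = (∫ ω, (G v v ω + H (-v) v ω) ∂P) + ∫ ω, 2 * (G v v ω * H (-v) v ω) ∂P :=
          integral_add (intGH' v (-v) v) ((hGH v v (-v) v).const_mul 2)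
        have d3 : ∫ ω, (G v v ω + H (-v) v ω) ∂P
            = (∫ ω, G v v ω ∂P) + ∫ ω, H (-v) v ω ∂P :=
          integral_add (hGint v v) (hHint (-v) v)
        have d4 : ∫ ω, 2 * (G v v ω * H (-v) v ω) ∂P
            = 2 * ∫ ω, G v v ω * H (-v) v ω ∂P :=
          integral_const_mul 2 fun ω => G v v ω * H (-v) v ω
        have hHeq : ∫ ω, H v v ω ∂P = ∫ ω, H (-v) v ω ∂P :=
          C1H v (-v) v (memV hv') (memVn hv') (memV hv')
        have hnn : 0 ≤ ∫ ω, G v v ω * H (-v) v ω ∂P :=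
          integral_nonneg fun ω => mul_nonneg (hGnn v v ω) (hHnn (-v) v ω)
        linarith [d1, d2, d3, d4, hHeq, hnn]
      · -- off-diagonal term
        refine le_of_eq ?_
        have l3 : ∀ a c : EuclideanSpace ℝ (Fin d),
            (fun ω => (G v v ω + H a v ω) * (G w w ω + H c w ω))
              = fun ω => G v v ω * G w w ω + (G v v ω * H c w ω
                  + (H a v ω * G w w ω + H a v ω * H c w ω)) := by
          intro a c; funext ω; ring
        rw [l3 v w, l3 (-v) (-w)]
        have n1 : ∫ ω, (H v v ω * G w w ω + H v v ω * H w w ω) ∂P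
            = (∫ ω, H v v ω * G w w ω ∂P) + ∫ ω, H v v ω * H w w ω ∂P :=
          integral_add (hHG v v w w) (hHH v v w w)
        have n2 : ∫ ω, (G v v ω * H w w ω + (H v v ω * G w w ω + H v v ω * H w w ω)) ∂P
            = (∫ ω, G v v ω * H w w ω ∂P)
              + ∫ ω, (H v v ω * G w w ω + H v v ω * H w w ω) ∂P :=
          integral_add (hGH v v w w) ((hHG v v w w).add (hHH v v w w))
        have n3 : ∫ ω, (G v v ω * G w w ω + (G v v ω * H w w ω
              + (H v v ω * G w w ω + H v v ω * H w w ω))) ∂P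
            = (∫ ω, G v v ω * G w w ω ∂P)
              + ∫ ω, (G v v ω * H w w ω + (H v v ω * G w w ω + H v v ω * H w w ω)) ∂P :=
          integral_add (hGG v v w w) ((hGH v v w w).add ((hHG v v w w).add (hHH v v w w)))
        have n1' : ∫ ω, (H (-v) v ω * G w w ω + H (-v) v ω * H (-w) w ω) ∂P
            = (∫ ω, H (-v) v ω * G w w ω ∂P) + ∫ ω, H (-v) v ω * H (-w) w ω ∂P :=
          integral_add (hHG (-v) v w w) (hHH (-v) v (-w) w)
        have n2' : ∫ ω, (G v v ω * H (-w) w ω + (H (-v) v ω * G w w ω + H (-v) v ω * H (-w) w ω)) ∂P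
            = (∫ ω, G v v ω * H (-w) w ω ∂P)
              + ∫ ω, (H (-v) v ω * G w w ω + H (-v) v ω * H (-w) w ω) ∂P :=
          integral_add (hGH v v (-w) w) ((hHG (-v) v w w).add (hHH (-v) v (-w) w))
        have n3' : ∫ ω, (G v v ω * G w w ω + (G v v ω * H (-w) w ω
              + (H (-v) v ω * G w w ω + H (-v) v ω * H (-w) w ω))) ∂P
            = (∫ ω, G v v ω * G w w ω ∂P)
              + ∫ ω, (G v v ω * H (-w) w ω + (H (-v) v ω * G w w ω + H (-v) v ω * H (-w) w ω)) ∂P :=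
          integral_add (hGG v v w w) ((hGH v v (-w) w).add ((hHG (-v) v w w).add (hHH (-v) v (-w) w)))
        rw [n3, n2, n1, n3', n2', n1']
        have q1 : ∫ ω, G v v ω * H w w ω ∂P = ∫ ω, G v v ω * H (-w) w ω ∂P :=
          C2GH v w v (-w) v w (memV hv') (memV hw') (memV hv') (memVn hw')
            (memV hv') (memV hw') hvw (hne_neg hv' hw')
        have q2 : ∫ ω, H v v ω * G w w ω ∂P = ∫ ω, H (-v) v ω * G w w ω ∂P :=
          C2HG v w (-v) w v w (memV hv') (memV hw') (memVn hv') (memV hw')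
            (memV hv') (memV hw') hvw (Ne.symm (hne_neg hw' hv'))
        have q3 : ∫ ω, H v v ω * H w w ω ∂P = ∫ ω, H (-v) v ω * H (-w) w ω ∂P :=
          C2HH v w (-v) (-w) v w (memV hv') (memV hw') (memVn hv') (memVn hw')
            (memV hv') (memV hw') hvw (fun h => hvw (neg_injective h))
        rw [q1, q2, q3]
    rw [hmean]
    linarith [hsq]
  calc variance (fun ω => (Nat.card V : ℝ)⁻¹ *
        ∑ v ∈ hVpfin.toFinset, (G v v ω + H v v ω)) P
      = (Nat.card V : ℝ)⁻¹ ^ 2 *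
        variance (fun ω => ∑ v ∈ hVpfin.toFinset, (G v v ω + H v v ω)) P :=
        variance_const_mul _ _ _
    _ ≤ (Nat.card V : ℝ)⁻¹ ^ 2 *
        variance (fun ω => ∑ v ∈ hVfin.toFinset, G v v ω) P := by
        exact mul_le_mul_of_nonneg_left main (sq_nonneg _)
    _ = variance (fun ω => (Nat.card V : ℝ)⁻¹ *
        ∑ v ∈ hVfin.toFinset, G v v ω) P := (variance_const_mul _ _ _).symm
end
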